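/- Let μ be a nonnegative Borel measure on [0, ∞) such that μ(I) > 0 for every nonempty open interval I ⊆ [0, ∞). Let y¹, y² : [0, ∞) → ℝ be càdlàg functions (right-continuous with left limits), and let y^i_{t−} denote the left limit of y^i at t (with y^i_{0−} := y^i_0). If y¹ = y² μ-almost everywhere, then y¹_{t−} = y²_{t−} for every t, and in particular y¹_{−} = y²_{−} μ-almost everywhere; conversely, if y¹_{−} = y²_{−} μ-almost everywhere then y¹ = y² μ-almost everywhere. -/

import Mathlib

open MeasureTheory Filter Set

/-- A set of full `μ.restrict (Ici 0)`-measure meets every nonempty open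
subinterval of `[0, ∞)`. -/
lemma dense_pick (μ : Measure ℝ)
    (hμ : ∀ a b : ℝ, 0 ≤ a → a < b → 0 < μ (Set.Ioo a b))
    {S : Set ℝ} (hS : ∀ᵐ x ∂ μ.restrict (Set.Ici 0), x ∈ S)
    {a b : ℝ} (ha : 0 ≤ a) (hab : a < b) : ∃ s ∈ S, s ∈ Set.Ioo a b := by
  by_contra h
  push_neg at h
  have hsub : Set.Ioo a b ⊆ {x | x ∉ S} := by
    intro x hx
    intro hxS
    exact h x hxS hx
  have h0 : μ.restrict (Set.Ici 0) {x | x ∉ S} = 0 := hS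
  have h1 : μ.restrict (Set.Ici 0) (Set.Ioo a b) = 0 :=
    le_antisymm (h0 ▸ measure_mono hsub) zero_le
  rw [Measure.restrict_apply measurableSet_Ioo] at h1
  have : Set.Ioo a b ∩ Set.Ici 0 = Set.Ioo a b := by
    apply Set.inter_eq_left.mpr
    intro x hx
    exact le_trans ha (le_of_lt hx.1)
  rw [this] at h1
  exact absurd h1 (hμ a b ha hab).ne'

/-- Near `t` from the right, left limits of a right-continuous function are
close to the value at `t`. -/
lemma left_lim_near (y l : ℝ → ℝ) (t : ℝ) (ht : 0 ≤ t)
    (hrc : Tendsto y (nhdsWithin t (Set.Ici t)) (nhds (y t)))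
    (hll : ∀ s : ℝ, 0 < s → Tendsto y (nhdsWithin s (Set.Ico 0 s)) (nhds (l s)))
    {ε : ℝ} (hε : 0 < ε) :
    ∃ δ > 0, ∀ s, t < s → s - t < δ → dist (l s) (y t) ≤ ε := by
  obtain ⟨δ, hδpos, hδ⟩ := Metric.tendsto_nhdsWithin_nhds.mp hrc ε hε
  refine ⟨δ, hδpos, fun s hts hstδ => ?_⟩
  have hs0 : 0 < s := lt_of_le_of_lt ht hts
  have hmono : nhdsWithin s (Set.Ioo t s) ≤ nhdsWithin s (Set.Ico 0 s) :=
    nhdsWithin_mono _ (fun u hu => ⟨le_trans ht hu.1.le, hu.2⟩)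
  have hNeBot : (nhdsWithin s (Set.Ioo t s)).NeBot := by
    rw [nhdsWithin_Ioo_eq_nhdsLT hts]
    infer_instance
  have htend : Tendsto (fun u => dist (y u) (y t)) (nhdsWithin s (Set.Ioo t s))
      (nhds (dist (l s) (y t))) :=
    (((hll s hs0).mono_left hmono).dist tendsto_const_nhds)
  refine le_of_tendsto htend ?_
  filter_upwards [self_mem_nhdsWithin] with u hu
  have : dist u t < δ := by
    rw [Real.dist_eq, abs_of_pos (sub_pos.mpr hu.1)]
    linarith [hu.2]
  exact (hδ (le_of_lt hu.1) this).le

theorem cadlag_ae_eq_iff_left_limits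
    (μ : Measure ℝ)
    (hμ : ∀ a b : ℝ, 0 ≤ a → a < b → 0 < μ (Set.Ioo a b))
    (y₁ y₂ l₁ l₂ : ℝ → ℝ)
    (hrc₁ : ∀ t : ℝ, 0 ≤ t → Tendsto y₁ (nhdsWithin t (Set.Ici t)) (nhds (y₁ t)))
    (hrc₂ : ∀ t : ℝ, 0 ≤ t → Tendsto y₂ (nhdsWithin t (Set.Ici t)) (nhds (y₂ t)))
    (hll₁ : ∀ t : ℝ, 0 < t → Tendsto y₁ (nhdsWithin t (Set.Ico 0 t)) (nhds (l₁ t)))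
    (hll₂ : ∀ t : ℝ, 0 < t → Tendsto y₂ (nhdsWithin t (Set.Ico 0 t)) (nhds (l₂ t)))
    (hl₁0 : l₁ 0 = y₁ 0) (hl₂0 : l₂ 0 = y₂ 0) :
    ((y₁ =ᵐ[μ.restrict (Set.Ici 0)] y₂) → ∀ t : ℝ, 0 ≤ t → l₁ t = l₂ t) ∧
    ((y₁ =ᵐ[μ.restrict (Set.Ici 0)] y₂) → l₁ =ᵐ[μ.restrict (Set.Ici 0)] l₂) ∧
    ((l₁ =ᵐ[μ.restrict (Set.Ici 0)] l₂) → y₁ =ᵐ[μ.restrict (Set.Ici 0)] y₂) := by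
  -- Step 1: if y₁ = y₂ a.e. then y₁ = y₂ everywhere on [0,∞).
  have key1 : (y₁ =ᵐ[μ.restrict (Set.Ici 0)] y₂) → ∀ t : ℝ, 0 ≤ t → y₁ t = y₂ t := by
    intro hae t ht
    have hS : ∀ᵐ x ∂ μ.restrict (Set.Ici 0), x ∈ {x | y₁ x = y₂ x} := hae
    have hd : ∀ ε : ℝ, 0 < ε → dist (y₁ t) (y₂ t) ≤ 2 * ε := by
      intro ε hε
      obtain ⟨δ₁, hδ₁pos, hδ₁⟩ := Metric.tendsto_nhdsWithin_nhds.mp (hrc₁ t ht) ε hε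
      obtain ⟨δ₂, hδ₂pos, hδ₂⟩ := Metric.tendsto_nhdsWithin_nhds.mp (hrc₂ t ht) ε hε
      obtain ⟨s, hsS, hs⟩ := dense_pick μ hμ hS ht
        (show t < t + min δ₁ δ₂ by linarith [lt_min hδ₁pos hδ₂pos])
      have hst : dist s t < min δ₁ δ₂ := by
        rw [Real.dist_eq, abs_of_pos (sub_pos.mpr hs.1)]
        linarith [hs.2]
      have h1 : dist (y₁ s) (y₁ t) < ε := hδ₁ hs.1.le (hst.trans_le (min_le_left _ _))
      have h2 : dist (y₂ s) (y₂ t) < ε := hδ₂ hs.1.le (hst.trans_le (min_le_right _ _))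
      calc dist (y₁ t) (y₂ t) ≤ dist (y₁ t) (y₁ s) + dist (y₁ s) (y₂ t) := dist_triangle _ _ _
        _ = dist (y₁ s) (y₁ t) + dist (y₂ s) (y₂ t) := by rw [dist_comm (y₁ t), hsS]
        _ ≤ 2 * ε := by linarith
    have : dist (y₁ t) (y₂ t) ≤ 0 := by
      by_contra h
      push_neg at h
      have := hd (dist (y₁ t) (y₂ t) / 4) (by linarith)
      linarith
    exact dist_le_zero.mp this
  -- Step 2: everywhere equality of y's gives everywhere equality of left limits.
  have key2 : (∀ t : ℝ, 0 ≤ t → y₁ t = y₂ t) → ∀ t : ℝ, 0 ≤ t → l₁ t = l₂ t := by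
    intro heq t ht
    rcases eq_or_lt_of_le ht with h0 | h0
    · rw [← h0, hl₁0, hl₂0]; exact heq 0 le_rfl
    · have hNeBot : (nhdsWithin t (Set.Ico 0 t)).NeBot := by
        have : (nhdsWithin t (Set.Ioo 0 t)).NeBot := by
          rw [nhdsWithin_Ioo_eq_nhdsLT h0]; infer_instance
        exact this.mono (nhdsWithin_mono _ (fun u hu => ⟨hu.1.le, hu.2⟩))
      have h2 : Tendsto y₁ (nhdsWithin t (Set.Ico 0 t)) (nhds (l₂ t)) := by
        refine (hll₂ t h0).congr' ?_
        filter_upwards [self_mem_nhdsWithin] with u hu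
        exact (heq u hu.1).symm
      exact tendsto_nhds_unique (hll₁ t h0) h2
  -- Step 3: if l₁ = l₂ a.e. then y₁ = y₂ everywhere on [0,∞).
  have key3 : (l₁ =ᵐ[μ.restrict (Set.Ici 0)] l₂) → ∀ t : ℝ, 0 ≤ t → y₁ t = y₂ t := by
    intro hae t ht
    have hS : ∀ᵐ x ∂ μ.restrict (Set.Ici 0), x ∈ {x | l₁ x = l₂ x} := hae
    have hd : ∀ ε : ℝ, 0 < ε → dist (y₁ t) (y₂ t) ≤ 2 * ε := by
      intro ε hε
      obtain ⟨δ₁, hδ₁pos, hδ₁⟩ := left_lim_near y₁ l₁ t ht (hrc₁ t ht) hll₁ hε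
      obtain ⟨δ₂, hδ₂pos, hδ₂⟩ := left_lim_near y₂ l₂ t ht (hrc₂ t ht) hll₂ hε
      obtain ⟨s, hsS, hs⟩ := dense_pick μ hμ hS ht
        (show t < t + min δ₁ δ₂ by linarith [lt_min hδ₁pos hδ₂pos])
      have hst : s - t < min δ₁ δ₂ := by linarith [hs.2]
      have h1 : dist (l₁ s) (y₁ t) ≤ ε := hδ₁ s hs.1 (hst.trans_le (min_le_left _ _))
      have h2 : dist (l₂ s) (y₂ t) ≤ ε := hδ₂ s hs.1 (hst.trans_le (min_le_right _ _))
      calc dist (y₁ t) (y₂ t) ≤ dist (y₁ t) (l₁ s) + dist (l₁ s) (y₂ t) := dist_triangle _ _ _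
        _ = dist (l₁ s) (y₁ t) + dist (l₂ s) (y₂ t) := by rw [dist_comm (y₁ t), hsS]
        _ ≤ 2 * ε := by linarith
    have : dist (y₁ t) (y₂ t) ≤ 0 := by
      by_contra h
      push_neg at h
      have := hd (dist (y₁ t) (y₂ t) / 4) (by linarith)
      linarith
    exact dist_le_zero.mp this
  refine ⟨fun hae => key2 (key1 hae), fun hae => ?_, fun hae => ?_⟩
  · filter_upwards [ae_restrict_mem measurableSet_Ici] with x hx
    exact key2 (key1 hae) x hx
  · filter_upwards [ae_restrict_mem measurableSet_Ici] with x hx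
    exact key3 hae x hx
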